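/- Let R be an irreducible reduced root system and α ∈ R. Then the reflection s_α, acting on the set {±1}\R of orbits of negation on R, has exactly 1 + (number of roots orthogonal to α)/2 fixed points; consequently, if α is long (including the simply laced case) the sign of s_α on {±1}\R is (-1)^{g}, where g is the dual Coxeter number of R, and if α is short it is (-1)^{g∨}, where g∨ is the dual Coxeter number of the dual root system. -/

import Mathlib

open scoped RealInnerProductSpace

variable {V : Type*} [NormedAddCommGroup V] [InnerProductSpace ℝ V] [FiniteDimensional ℝ V]

/-- A (reduced) root system in a real inner product space: a finite set of nonzero vectors,
closed under the associated reflections, with integral pairings, and reduced. -/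
structure RootSystemData (V : Type*) [NormedAddCommGroup V] [InnerProductSpace ℝ V] where
  carrier : Finset V
  ne_zero : ∀ α ∈ carrier, α ≠ 0
  reduced : ∀ α ∈ carrier, ∀ t : ℝ, t • α ∈ carrier → t = 1 ∨ t = -1
  refl_mem : ∀ α ∈ carrier, ∀ β ∈ carrier, β - (2 * ⟪β, α⟫ / ⟪α, α⟫) • α ∈ carrier
  int_pairing : ∀ α ∈ carrier, ∀ β ∈ carrier, ∃ n : ℤ, (2 * ⟪β, α⟫ / ⟪α, α⟫) = (n : ℝ)

/-- The reflection in the root `α`: the orthogonal reflection in the hyperplane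
perpendicular to `α`, as a linear automorphism of `V`. -/
noncomputable def reflRoot (α : V) : V ≃ₗ[ℝ] V :=
  (Submodule.reflection ((ℝ ∙ α)ᗮ)).toLinearEquiv

/-- The automorphism group of a root system: linear automorphisms of `V` preserving the set of
roots. -/
def RootSystemData.aut (Rs : RootSystemData V) : Subgroup (V ≃ₗ[ℝ] V) where
  carrier := {g | ∀ α : V, α ∈ Rs.carrier ↔ g α ∈ Rs.carrier}
  one_mem' := fun α => Iff.rfl
  mul_mem' := by
    intro a b ha hb α
    exact (hb α).trans (ha (b α))
  inv_mem' := by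
    intro a ha α
    constructor
    · intro h
      have := (ha (a⁻¹ α)).mpr
      have h2 : a (a⁻¹ α) = α := a.apply_symm_apply α
      rw [h2] at this
      exact (ha (a⁻¹ α)).mpr (by rwa [h2])
    · intro h
      have h2 : a (a⁻¹ α) = α := a.apply_symm_apply α
      have := (ha (a⁻¹ α)).mp h
      rwa [h2] at this

/-- A system of simple roots (a base) of a root system: a linearly independent subset of the
roots such that every root is a nonnegative or a nonpositive combination of its elements. -/
def RootSystemData.IsSimpleSystem (Rs : RootSystemData V) (Δ : Finset V) : Prop :=
  ↑Δ ⊆ (Rs.carrier : Set V) ∧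
  LinearIndependent ℝ (fun x : {x : V // x ∈ Δ} => x.1) ∧
  ∀ α ∈ Rs.carrier,
    (∃ c : V → ℝ, (∀ β ∈ Δ, 0 ≤ c β) ∧ α = ∑ β ∈ Δ, c β • β) ∨
    (∃ c : V → ℝ, (∀ β ∈ Δ, c β ≤ 0) ∧ α = ∑ β ∈ Δ, c β • β)

/-- Parabolic subgroups of the automorphism group of a root system: for a system of simple
roots `Δ` and a subset `S ⊆ Δ`, the subgroup `A_{S ⊆ Δ} = W_S ⋊ Stab_{Aut(R,Δ)}(S)`, i.e. the
subgroup generated by the reflections in roots of `S` together with the automorphisms of the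
root system stabilising `Δ` and `S` (setwise). -/
def RootSystemData.IsParabolic (Rs : RootSystemData V) (P : Subgroup (V ≃ₗ[ℝ] V)) : Prop :=
  ∃ Δ S : Finset V, Rs.IsSimpleSystem Δ ∧ S ⊆ Δ ∧
    P = Subgroup.closure
      ((fun α => reflRoot α) '' ↑S ∪
        {g | g ∈ Rs.aut ∧ ⇑g '' ↑Δ = ↑Δ ∧ ⇑g '' ↑S = ↑S})

/-- An automorphism of a root system is elliptic if it belongs to no proper parabolic
subgroup of the automorphism group. -/
def RootSystemData.IsElliptic (Rs : RootSystemData V) (w : V ≃ₗ[ℝ] V) : Prop :=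
  ∀ P : Subgroup (V ≃ₗ[ℝ] V), Rs.IsParabolic P → P ≠ Rs.aut → w ∉ P

open scoped Classical

/-- The equivalence relation identifying a root with its negative; the quotient is the orbit
set `{±1}\R`. -/
def negSetoidOn {V : Type*} [NormedAddCommGroup V] [InnerProductSpace ℝ V]
    (S : Finset V) : Setoid {x : V // x ∈ S} where
  r x y := x.1 = y.1 ∨ x.1 = -y.1
  iseqv := by
    refine ⟨fun x => Or.inl rfl, ?_, ?_⟩
    · rintro x y (h | h)
      · exact Or.inl h.symm
      · exact Or.inr (by rw [h, neg_neg])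
    · rintro x y z (h1 | h1) (h2 | h2)
      · exact Or.inl (h1.trans h2)
      · exact Or.inr (h1.trans h2)
      · exact Or.inr (by rw [h1, h2])
      · exact Or.inl (by rw [h1, h2, neg_neg])

/-- A root system is irreducible if it is nonempty and cannot be split into two mutually
orthogonal proper subsets. -/
def RootSystemData.IsIrreducible {V : Type*} [NormedAddCommGroup V] [InnerProductSpace ℝ V]
    (Rs : RootSystemData V) : Prop :=
  Rs.carrier.Nonempty ∧
  ∀ S : Set V, S ⊆ ↑Rs.carrier →
    (∀ x ∈ S, ∀ y ∈ (↑Rs.carrier : Set V) \ S, ⟪x, y⟫ = 0) →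
    S = ∅ ∨ S = ↑Rs.carrier

section Helpers

variable {V : Type*} [NormedAddCommGroup V] [InnerProductSpace ℝ V] [FiniteDimensional ℝ V]

lemma reflRoot_apply_eq (α β : V) :
    reflRoot α β = β - (2 * ⟪β, α⟫ / ⟪α, α⟫) • α := by
  have h : reflRoot α β = Submodule.reflection ((ℝ ∙ α)ᗮ) β := rfl
  rw [h, Submodule.reflection_orthogonal_apply, Submodule.reflection_singleton_apply]
  have h1 : 2 * ⟪β, α⟫ / ⟪α, α⟫ = 2 * (⟪α, β⟫ / ‖α‖ ^ 2) := by
    rw [real_inner_comm β α, ← real_inner_self_eq_norm_sq]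
    ring
  rw [h1]
  simp only [RCLike.ofReal_real_eq_id, id_eq]
  module

lemma reflRoot_invol (α β : V) : reflRoot α (reflRoot α β) = β := by
  have h : ∀ v : V, reflRoot α v = Submodule.reflection ((ℝ ∙ α)ᗮ) v := fun _ => rfl
  rw [h, h]
  exact Submodule.reflection_reflection _ β

lemma negSetoid_mk_eq {S : Finset V} (x y : {v : V // v ∈ S}) :
    Quotient.mk (negSetoidOn S) x = Quotient.mk (negSetoidOn S) y ↔
      (x.1 = y.1 ∨ x.1 = -y.1) := by
  constructor
  · exact fun h => Quotient.exact h
  · exact fun h => Quotient.sound h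

lemma pair_card {S : Finset V} (h0 : ∀ β ∈ S, β ≠ 0) (hneg : ∀ β ∈ S, -β ∈ S)
    (y : {v : V // v ∈ S}) :
    Nat.card {x : {v : V // v ∈ S} // x.1 = y.1 ∨ x.1 = -y.1} = 2 := by
  rw [Nat.card_eq_two_iff]
  refine ⟨⟨y, Or.inl rfl⟩, ⟨⟨-y.1, hneg _ y.2⟩, Or.inr rfl⟩, ?_, ?_⟩
  · intro h
    rw [Subtype.ext_iff, Subtype.ext_iff] at h
    have hy0 := h0 y.1 y.2
    have h2 : (2 : ℝ) • y.1 = 0 := by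
      rw [two_smul]
      nth_rewrite 1 [h]
      exact neg_add_cancel _
    rcases smul_eq_zero.mp h2 with h' | h'
    · norm_num at h'
    · exact hy0 h'
  · apply Set.eq_univ_iff_forall.mpr
    rintro ⟨x, (hx | hx)⟩
    · exact Set.mem_insert_iff.mpr (Or.inl (Subtype.ext (Subtype.ext hx)))
    · exact Set.mem_insert_iff.mpr (Or.inr (Subtype.ext (Subtype.ext hx)))

lemma half_card {S : Finset V} (h0 : ∀ β ∈ S, β ≠ 0) (hneg : ∀ β ∈ S, -β ∈ S)
    (p : Quotient (negSetoidOn S) → Prop) :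
    Nat.card {x : {v : V // v ∈ S} // p (Quotient.mk (negSetoidOn S) x)} =
      2 * Nat.card {ω : Quotient (negSetoidOn S) // p ω} := by
  classical
  have fib : ∀ ω : Quotient (negSetoidOn S),
      Nat.card {x : {v : V // v ∈ S} // Quotient.mk (negSetoidOn S) x = ω} = 2 := by
    intro ω
    induction ω using Quotient.ind with | _ y => ?_
    rw [← pair_card h0 hneg y]
    exact Nat.card_congr (Equiv.subtypeEquivRight fun x => negSetoid_mk_eq x y)
  have e : {x : {v : V // v ∈ S} // p (Quotient.mk (negSetoidOn S) x)} ≃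
      Σ ω : {ω : Quotient (negSetoidOn S) // p ω},
        {x : {v : V // v ∈ S} // Quotient.mk (negSetoidOn S) x = ω.1} :=
    { toFun := fun x => ⟨⟨Quotient.mk (negSetoidOn S) x.1, x.2⟩, ⟨x.1, rfl⟩⟩
      invFun := fun y => ⟨y.2.1, by rw [y.2.2]; exact y.1.2⟩
      left_inv := fun x => rfl
      right_inv := by
        rintro ⟨⟨ω, hω⟩, ⟨x, hx⟩⟩
        dsimp only at hx ⊢
        subst hx
        rfl }
  rw [Nat.card_congr e, Nat.card_eq_fintype_card, Fintype.card_sigma]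
  have hconst : ∀ ω : {ω : Quotient (negSetoidOn S) // p ω},
      Fintype.card {x : {v : V // v ∈ S} // Quotient.mk (negSetoidOn S) x = ω.1} = 2 :=
    fun ω => by rw [← Nat.card_eq_fintype_card]; exact fib ω.1
  rw [Finset.sum_congr rfl fun ω _ => hconst ω, Finset.sum_const, smul_eq_mul,
    Nat.card_eq_fintype_card, mul_comm]
  rfl

end Helpers

/-- Let `R` be an irreducible reduced root system and `α ∈ R`.  The reflection `s_α`, acting
on the set `{±1}\R` of orbits of negation on `R`, has exactly
`1 + (number of roots orthogonal to α)/2` fixed points; consequently, if `α` is long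
(including the simply laced case) the sign of `s_α` on `{±1}\R` is `(-1)^g`, where `g` is the
dual Coxeter number of `R` (characterised by: the number of roots not orthogonal to a long
root is `4g - 6`), and if `α` is short it is `(-1)^{g∨}`, where `g∨` is the dual Coxeter
number of the dual root system (characterised by: the number of roots not orthogonal to a
short root is `4g∨ - 6`). -/
theorem reflection_fixed_points_and_sign_on_neg_quotient
    {V : Type*} [NormedAddCommGroup V] [InnerProductSpace ℝ V] [FiniteDimensional ℝ V]
    (Rs : RootSystemData V) (hirr : Rs.IsIrreducible)
    (α : V) (hα : α ∈ Rs.carrier)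
    (hinv : ∀ β ∈ Rs.carrier, reflRoot α β ∈ Rs.carrier)
    (σ : Equiv.Perm (Quotient (negSetoidOn Rs.carrier)))
    (hσ : ∀ x : {x : V // x ∈ Rs.carrier},
      σ (Quotient.mk (negSetoidOn Rs.carrier) x) =
        Quotient.mk (negSetoidOn Rs.carrier) ⟨reflRoot α x.1, hinv x.1 x.2⟩)
    (g gd : ℕ) :
    Nat.card {ω : Quotient (negSetoidOn Rs.carrier) // σ ω = ω} =
        1 + Nat.card {β : V // β ∈ Rs.carrier ∧ ⟪β, α⟫ = 0} / 2 ∧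
    ((∀ β ∈ Rs.carrier, ‖β‖ ≤ ‖α‖) →
      Nat.card {β : V // β ∈ Rs.carrier ∧ ⟪β, α⟫ ≠ 0} + 6 = 4 * g →
      Equiv.Perm.sign σ = (-1 : ℤˣ) ^ g) ∧
    ((∃ β ∈ Rs.carrier, ‖α‖ < ‖β‖) →
      Nat.card {β : V // β ∈ Rs.carrier ∧ ⟪β, α⟫ ≠ 0} + 6 = 4 * gd →
      Equiv.Perm.sign σ = (-1 : ℤˣ) ^ gd) := by
  
  classical
  have h0 : ∀ β ∈ Rs.carrier, β ≠ 0 := Rs.ne_zero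
  have hnegS : ∀ β ∈ Rs.carrier, -β ∈ Rs.carrier := by
    intro β hβ
    have hββ : ⟪β, β⟫ ≠ 0 := inner_self_ne_zero.mpr (h0 β hβ)
    have h2 := Rs.refl_mem β hβ β hβ
    have hc : 2 * ⟪β, β⟫ / ⟪β, β⟫ = 2 := by field_simp
    rw [hc] at h2
    have he : β - (2 : ℝ) • β = -β := by rw [two_smul]; abel
    rwa [he] at h2
  have hα0 : α ≠ 0 := h0 α hα
  have hαα : ⟪α, α⟫ ≠ 0 := inner_self_ne_zero.mpr hα0
  -- characterisation of fixed orbits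
  have hfixmem : ∀ x : {v : V // v ∈ Rs.carrier},
      (σ (Quotient.mk (negSetoidOn Rs.carrier) x) = Quotient.mk (negSetoidOn Rs.carrier) x ↔
        ((x.1 = α ∨ x.1 = -α) ∨ ⟪x.1, α⟫ = 0)) := by
    intro x
    rw [hσ x, negSetoid_mk_eq]
    dsimp only
    constructor
    · rintro (h | h)
      · right
        rw [reflRoot_apply_eq] at h
        have hz : (2 * ⟪x.1, α⟫ / ⟪α, α⟫) • α = 0 := sub_eq_self.mp h
        rcases smul_eq_zero.mp hz with h' | h'
        · rcases div_eq_zero_iff.mp h' with h'' | h''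
          · linarith
          · exact absurd h'' hαα
        · exact absurd h' hα0
      · left
        rw [reflRoot_apply_eq] at h
        have hx : x.1 = ((2 * ⟪x.1, α⟫ / ⟪α, α⟫) / 2) • α := by
          have h2 : x.1 + x.1 = (2 * ⟪x.1, α⟫ / ⟪α, α⟫) • α := by
            have := congrArg (fun v => v + (x.1 + (2 * ⟪x.1, α⟫ / ⟪α, α⟫) • α)) h
            linear_combination (norm := module) h
          rw [div_eq_inv_mul, mul_smul, ← h2, smul_add]
          match_scalars <;> norm_num
        rcases Rs.reduced α hα _ (by rw [← hx]; exact x.2) with h1 | h1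
        · left; rw [hx, h1, one_smul]
        · right; rw [hx, h1, neg_one_smul]
    · rintro ((h | h) | h)
      · right
        rw [reflRoot_apply_eq, h]
        have hc : 2 * ⟪α, α⟫ / ⟪α, α⟫ = 2 := by field_simp
        rw [hc, two_smul]
        abel
      · right
        rw [reflRoot_apply_eq, h]
        have hc : 2 * ⟪-α, α⟫ / ⟪α, α⟫ = -2 := by
          rw [inner_neg_left]
          field_simp
        rw [hc]
        match_scalars <;> norm_num
      · left
        rw [reflRoot_apply_eq, h]
        simp
  -- counting equations
  have eqA : 2 * Nat.card {ω : Quotient (negSetoidOn Rs.carrier) // σ ω = ω} =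
      2 + Nat.card {β : V // β ∈ Rs.carrier ∧ ⟪β, α⟫ = 0} := by
    rw [← half_card h0 hnegS (fun ω => σ ω = ω)]
    rw [Nat.card_congr (Equiv.subtypeEquivRight hfixmem)]
    have hdisj : Disjoint (fun x : {v : V // v ∈ Rs.carrier} => x.1 = α ∨ x.1 = -α)
        (fun x => ⟪x.1, α⟫ = 0) := by
      intro r hr1 hr2 x hx
      rcases hr1 x hx with h | h
      · have hne : ⟪x.1, α⟫ ≠ 0 := by rw [h]; exact hαα
        exact hne (hr2 x hx)
      · have hne : ⟪x.1, α⟫ ≠ 0 := by rw [h, inner_neg_left]; simpa using hαα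
        exact hne (hr2 x hx)
    rw [Nat.card_congr (subtypeOrEquiv _ _ hdisj), Nat.card_sum]
    congr 1
    · exact pair_card h0 hnegS ⟨α, hα⟩
    · exact Nat.card_congr (Equiv.subtypeSubtypeEquivSubtypeInter
        (· ∈ Rs.carrier) (fun β => ⟪β, α⟫ = 0))
  have eqC : Nat.card {v : V // v ∈ Rs.carrier} =
      2 * Nat.card (Quotient (negSetoidOn Rs.carrier)) :=
    calc Nat.card {v : V // v ∈ Rs.carrier}
        = Nat.card {x : {v : V // v ∈ Rs.carrier} // True} :=
          (Nat.card_congr (Equiv.subtypeUnivEquiv fun _ => trivial)).symm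
      _ = 2 * Nat.card {ω : Quotient (negSetoidOn Rs.carrier) // True} :=
          half_card h0 hnegS (fun _ => True)
      _ = 2 * Nat.card (Quotient (negSetoidOn Rs.carrier)) := by
          rw [Nat.card_congr (Equiv.subtypeUnivEquiv fun _ => trivial)]
  have eqD : Nat.card {v : V // v ∈ Rs.carrier} =
      Nat.card {β : V // β ∈ Rs.carrier ∧ ⟪β, α⟫ = 0} +
        Nat.card {β : V // β ∈ Rs.carrier ∧ ⟪β, α⟫ ≠ 0} := by
    rw [← Nat.card_congr (Equiv.subtypeSubtypeEquivSubtypeInter (· ∈ Rs.carrier)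
        (fun β => ⟪β, α⟫ = 0)),
      ← Nat.card_congr (Equiv.subtypeSubtypeEquivSubtypeInter (· ∈ Rs.carrier)
        (fun β => ⟪β, α⟫ ≠ 0)),
      ← Nat.card_sum]
    exact (Nat.card_congr (Equiv.sumCompl fun x : {v : V // v ∈ Rs.carrier} =>
      ⟪x.1, α⟫ = 0)).symm
  have key : ∀ n : ℕ, Nat.card {β : V // β ∈ Rs.carrier ∧ ⟪β, α⟫ ≠ 0} + 6 = 4 * n →
      Equiv.Perm.sign σ = (-1 : ℤˣ) ^ n := by
    intro n hn
    have hinvol : σ * σ = 1 := by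
      ext ω
      induction ω using Quotient.ind with | _ x => ?_
      simp only [Equiv.Perm.mul_apply, Equiv.Perm.one_apply]
      rw [hσ x, hσ ⟨reflRoot α x.1, hinv x.1 x.2⟩]
      exact Quotient.sound (Or.inl (reflRoot_invol α x.1))
    have horder : orderOf σ ∣ 2 := orderOf_dvd_of_pow_eq_one (by rw [pow_two]; exact hinvol)
    have hall : ∀ a ∈ σ.cycleType, a = 2 := by
      intro a ha
      have h2 := Equiv.Perm.two_le_of_mem_cycleType ha
      have hd : a ∣ 2 := (Multiset.dvd_lcm ha).trans
        (by rw [Equiv.Perm.lcm_cycleType]; exact horder)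
      have := Nat.le_of_dvd (by norm_num) hd
      omega
    have hrep : σ.cycleType = Multiset.replicate (Multiset.card σ.cycleType) 2 :=
      Multiset.eq_replicate_card.mpr hall
    have hsum : σ.cycleType.sum = 2 * Multiset.card σ.cycleType := by
      rw [hrep, Multiset.sum_replicate, smul_eq_mul, mul_comm, Multiset.card_replicate]
    have hsupp : σ.support.card = 2 * Multiset.card σ.cycleType := by
      rw [← Equiv.Perm.sum_cycleType, hsum]
    have hsgn : Equiv.Perm.sign σ = (-1 : ℤˣ) ^ Multiset.card σ.cycleType := by
      rw [Equiv.Perm.sign_of_cycleType, hsum, pow_add, pow_mul, neg_one_sq, one_pow, one_mul]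
    have hcomp : Nat.card {ω : Quotient (negSetoidOn Rs.carrier) // σ ω = ω} =
        Fintype.card (Quotient (negSetoidOn Rs.carrier)) - σ.support.card := by
      rw [Nat.card_congr (Equiv.subtypeEquivRight (q := fun ω => ω ∈ σ.supportᶜ)
        (fun ω => by simp [Finset.mem_compl, Equiv.Perm.mem_support]))]
      rw [Nat.card_eq_fintype_card]
      exact (Fintype.card_coe _).trans (Finset.card_compl _)
    have hle : σ.support.card ≤ Fintype.card (Quotient (negSetoidOn Rs.carrier)) :=
      Finset.card_le_univ _
    have hQc : Nat.card (Quotient (negSetoidOn Rs.carrier)) =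
        Fintype.card (Quotient (negSetoidOn Rs.carrier)) := Nat.card_eq_fintype_card
    have hkg : Multiset.card σ.cycleType + 2 = n := by omega
    rw [hsgn, ← hkg, pow_add, neg_one_sq, mul_one]
  exact ⟨by omega, fun _ => key g, fun _ => key gd⟩
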